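/- For all (ξ, λ, x, y, t) ∈ ℂ^{2n+3} the series Φ_{ξ,λ}(x+iy, t) = e^{iλt} e^{−λ(x²+y²)/4} (1 + Σ_{k≥1} ((x²+y²)ᵏ / ((n)ₖ k! 4ᵏ)) ∏_{d=0}^{k−1} (λ(2d+n) − ξ)) converges locally uniformly on ℂ^{2n+3} and defines an entire (holomorphic) function of (ξ, λ, x, y, t). -/

import Mathlib

open Complex Filter Metric

noncomputable section

variable (n : ℕ)

/-- The `k`-th term of the series defining the spherical function
`Φ_{ξ,λ}(x+iy,t)` (without the exponential prefactor); here the coordinates are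
`p = (ξ, λ, x, y, t) ∈ ℂ × ℂ × ℂⁿ × ℂⁿ × ℂ`, `x² + y²` means `Σⱼ (xⱼ² + yⱼ²)`,
and the `k = 0` term equals `1`. -/
def phiTerm (p : ℂ × ℂ × (Fin n → ℂ) × (Fin n → ℂ) × ℂ) (k : ℕ) : ℂ :=
  (∑ j, (p.2.2.1 j ^ 2 + p.2.2.2.1 j ^ 2)) ^ k /
      ((ascPochhammer ℂ k).eval (n : ℂ) * k.factorial * 4 ^ k) *
    ∏ d ∈ Finset.range k, (p.2.1 * (2 * d + n) - p.1)

lemma aux_fact_le (hn : 1 ≤ n) (k : ℕ) : k.factorial ≤ (ascPochhammer ℕ k).eval n := by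
  rw [ascPochhammer_nat_eq_ascFactorial]
  induction k with
  | zero => simp
  | succ k ih =>
    rw [Nat.factorial_succ, Nat.ascFactorial_succ]
    exact Nat.mul_le_mul (by omega) ih

lemma aux_poly_diff : Differentiable ℂ
    (fun p : ℂ × ℂ × (Fin n → ℂ) × (Fin n → ℂ) × ℂ =>
      ∑ j, (p.2.2.1 j ^ 2 + p.2.2.2.1 j ^ 2)) := by
  fun_prop

lemma phiTerm_differentiable (k : ℕ) :
    Differentiable ℂ (fun p : ℂ × ℂ × (Fin n → ℂ) × (Fin n → ℂ) × ℂ => phiTerm n p k) := by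
  unfold phiTerm
  refine Differentiable.mul ?_ ?_
  · fun_prop
  · intro p
    exact (HasFDerivAt.finset_prod (u := Finset.range k) (fun d _ =>
      (show DifferentiableAt ℂ
        (fun q : ℂ × ℂ × (Fin n → ℂ) × (Fin n → ℂ) × ℂ => q.2.1 * (2 * (d:ℂ) + n) - q.1) p
        by fun_prop).hasFDerivAt)).differentiableAt

lemma phiTerm_norm_le (hn : 1 ≤ n) {R : ℝ}
    {p : ℂ × ℂ × (Fin n → ℂ) × (Fin n → ℂ) × ℂ} (hp : ‖p‖ ≤ R) (k : ℕ) :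
    ‖phiTerm n p k‖ ≤
      ((2 * n * (R + 1) ^ 2) * (((n : ℝ) + 3) * (R + 1))) ^ k / k.factorial := by
  have hR0 : 0 ≤ R := le_trans (norm_nonneg p) hp
  have hξ : ‖p.1‖ ≤ R := (norm_fst_le p).trans hp
  have hlam : ‖p.2.1‖ ≤ R := ((norm_fst_le p.2).trans (norm_snd_le p)).trans hp
  have hx : ∀ j, ‖p.2.2.1 j‖ ≤ R := fun j =>
    ((norm_le_pi_norm _ j).trans (((norm_fst_le p.2.2).trans (norm_snd_le p.2)).trans
      (norm_snd_le p))).trans hp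
  have hy : ∀ j, ‖p.2.2.2.1 j‖ ≤ R := fun j =>
    ((norm_le_pi_norm _ j).trans ((((norm_fst_le p.2.2.2).trans (norm_snd_le p.2.2)).trans
      (norm_snd_le p.2)).trans (norm_snd_le p))).trans hp
  have hz : ‖∑ j, (p.2.2.1 j ^ 2 + p.2.2.2.1 j ^ 2)‖ ≤ 2 * n * (R + 1) ^ 2 := by
    calc ‖∑ j, (p.2.2.1 j ^ 2 + p.2.2.2.1 j ^ 2)‖
        ≤ ∑ j : Fin n, ‖p.2.2.1 j ^ 2 + p.2.2.2.1 j ^ 2‖ := norm_sum_le _ _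
      _ ≤ ∑ _j : Fin n, 2 * (R + 1) ^ 2 := by
          refine Finset.sum_le_sum fun j _ => ?_
          calc ‖p.2.2.1 j ^ 2 + p.2.2.2.1 j ^ 2‖
              ≤ ‖p.2.2.1 j‖ ^ 2 + ‖p.2.2.2.1 j‖ ^ 2 := by
                refine (norm_add_le _ _).trans ?_
                simp [norm_pow]
            _ ≤ (R + 1) ^ 2 + (R + 1) ^ 2 := by
                gcongr <;> [exact (hx j).trans (by linarith); exact (hy j).trans (by linarith)]
            _ = 2 * (R + 1) ^ 2 := by ring
      _ = 2 * n * (R + 1) ^ 2 := by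
          simp [Finset.sum_const, Finset.card_univ]
          ring
  have hprod : ‖∏ d ∈ Finset.range k, (p.2.1 * (2 * d + n) - p.1)‖ ≤
      (((n : ℝ) + 3) * (R + 1)) ^ k * k.factorial := by
    rw [norm_prod]
    calc ∏ d ∈ Finset.range k, ‖p.2.1 * (2 * d + n) - p.1‖
        ≤ ∏ d ∈ Finset.range k, (((n : ℝ) + 3) * (R + 1) * (d + 1)) := by
          refine Finset.prod_le_prod (fun _ _ => norm_nonneg _) fun d _ => ?_
          have hcast : (2 * (d : ℂ) + (n : ℂ)) = ((2 * d + n : ℕ) : ℂ) := by push_cast; ring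
          calc ‖p.2.1 * (2 * d + n) - p.1‖
              ≤ ‖p.2.1‖ * ‖(2 * (d : ℂ) + n)‖ + ‖p.1‖ := by
                refine (norm_sub_le _ _).trans (le_of_eq ?_)
                rw [norm_mul]
            _ = ‖p.2.1‖ * (2 * d + n) + ‖p.1‖ := by
                rw [hcast, Complex.norm_natCast]; push_cast; ring
            _ ≤ R * (2 * d + n) + R := by
                gcongr
            _ ≤ ((n : ℝ) + 3) * (R + 1) * (d + 1) := by
                have hd0 : (0 : ℝ) ≤ d := Nat.cast_nonneg d
                have hn0 : (0 : ℝ) ≤ n := Nat.cast_nonneg n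
                nlinarith [mul_nonneg hn0 hd0, mul_nonneg (mul_nonneg hn0 hR0) hd0,
                  mul_nonneg hR0 hd0]
      _ = (((n : ℝ) + 3) * (R + 1)) ^ k * k.factorial := by
          rw [Finset.prod_mul_distrib, Finset.prod_const, Finset.card_range]
          congr 1
          have : ∏ d ∈ Finset.range k, ((d : ℝ) + 1) =
              ((∏ d ∈ Finset.range k, (d + 1) : ℕ) : ℝ) := by push_cast; rfl
          rw [this, Finset.prod_range_add_one_eq_factorial]
  have hfac : (0 : ℝ) < k.factorial := by positivity
  have hden : (k.factorial : ℝ) * k.factorial ≤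
      ‖(ascPochhammer ℂ k).eval (n : ℂ) * (k.factorial : ℂ) * 4 ^ k‖ := by
    rw [norm_mul, norm_mul]
    have h1 : ‖(ascPochhammer ℂ k).eval (n : ℂ)‖ = (((ascPochhammer ℕ k).eval n : ℕ) : ℝ) := by
      rw [← ascPochhammer_eval_cast]
      exact Complex.norm_natCast _
    have h2 : (k.factorial : ℝ) ≤ (((ascPochhammer ℕ k).eval n : ℕ) : ℝ) := by
      exact_mod_cast aux_fact_le n hn k
    have h3 : ‖(k.factorial : ℂ)‖ = (k.factorial : ℝ) := Complex.norm_natCast _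
    have h4 : (1 : ℝ) ≤ ‖(4 : ℂ) ^ k‖ := by
      rw [norm_pow]
      rw [show ((4 : ℂ)) = ((4 : ℕ) : ℂ) by norm_num, Complex.norm_natCast]
      exact one_le_pow₀ (by norm_num)
    calc (k.factorial : ℝ) * k.factorial = k.factorial * k.factorial * 1 := by ring
      _ ≤ ‖(ascPochhammer ℂ k).eval (n : ℂ)‖ * ‖(k.factorial : ℂ)‖ * ‖(4 : ℂ) ^ k‖ := by
          refine mul_le_mul (mul_le_mul ?_ ?_ (by positivity) (by positivity)) h4
            (by norm_num) (by positivity)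
          · rw [h1]; exact h2
          · rw [h3]
  have key : ‖phiTerm n p k‖ ≤
      ((2 * n * (R + 1) ^ 2) ^ k / ((k.factorial : ℝ) * k.factorial)) *
        ((((n : ℝ) + 3) * (R + 1)) ^ k * k.factorial) := by
    rw [phiTerm, norm_mul, norm_div, norm_pow]
    refine mul_le_mul ?_ hprod (norm_nonneg _) (by positivity)
    exact div_le_div₀ (by positivity) (pow_le_pow_left₀ (norm_nonneg _) hz k)
      (by positivity) hden
  refine key.trans (le_of_eq ?_)
  have hfne : (k.factorial : ℝ) ≠ 0 := by positivity
  have habc : ∀ A B f : ℝ, f ≠ 0 → A ^ k / (f * f) * (B ^ k * f) = (A * B) ^ k / f := by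
    intro A B f hf
    rw [mul_pow]
    field_simp
  exact habc _ _ _ hfne

lemma norm_fderiv_le_of_ball {E : Type*} [NormedAddCommGroup E] [NormedSpace ℂ E]
    {f : E → ℂ} (hf : Differentiable ℂ f) {p : E} {M : ℝ} (hM : 0 < M)
    (hb : ∀ q ∈ Metric.ball p 1, ‖f q‖ ≤ M) : ‖fderiv ℂ f p‖ ≤ 3 * M := by
  refine ContinuousLinearMap.opNorm_le_bound _ (by positivity) fun v => ?_
  rcases eq_or_ne v 0 with rfl | hv
  · simp
  have hv' : 0 < ‖v‖ := norm_pos_iff.mpr hv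
  set g : ℂ → ℂ := fun t => f (p + t • v) with hgdef
  have hgd : ∀ t : ℂ, HasDerivAt g (fderiv ℂ f (p + t • v) v) t := by
    intro t
    have h1 : HasDerivAt (fun t : ℂ => p + t • v) v t := by
      simpa using ((hasDerivAt_id t).smul_const v).const_add p
    exact ((hf (p + t • v)).hasFDerivAt).comp_hasDerivAt t h1
  have hgdiff : DifferentiableOn ℂ g (Metric.ball 0 (1 / ‖v‖)) :=
    fun t _ => (hgd t).differentiableAt.differentiableWithinAt
  have hmem : ∀ t : ℂ, t ∈ Metric.ball (0 : ℂ) (1 / ‖v‖) → p + t • v ∈ Metric.ball p 1 := by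
    intro t ht
    rw [Metric.mem_ball, dist_eq_norm] at ht ⊢
    rw [add_sub_cancel_left, norm_smul]
    calc ‖t‖ * ‖v‖ < (1 / ‖v‖) * ‖v‖ := by
          rw [sub_zero] at ht
          exact mul_lt_mul_of_pos_right ht hv'
      _ = 1 := by field_simp
  have hmaps : Set.MapsTo g (Metric.ball 0 (1 / ‖v‖)) (Metric.ball (g 0) (3 * M)) := by
    intro t ht
    rw [Metric.mem_ball, dist_eq_norm]
    have h0 : p + (0 : ℂ) • v ∈ Metric.ball p 1 := by
      simpa using Metric.mem_ball_self one_pos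
    calc ‖g t - g 0‖ ≤ ‖g t‖ + ‖g 0‖ := norm_sub_le _ _
      _ ≤ M + M := add_le_add (hb _ (hmem t ht)) (hb _ h0)
      _ < 3 * M := by linarith
  have key := Complex.norm_deriv_le_div_of_mapsTo_ball hgdiff (hmaps.mono_right Metric.ball_subset_closedBall) (by positivity)
  have hderiv : deriv g 0 = fderiv ℂ f p v := by
    have := (hgd 0).deriv
    simpa using this
  rw [hderiv] at key
  calc ‖(fderiv ℂ f p) v‖ ≤ 3 * M / (1 / ‖v‖) := key
    _ = 3 * M * ‖v‖ := by field_simp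

/-- The spherical function `Φ_{ξ,λ}(x+iy,t)`, defined for all complex
parameters and variables. -/
def sphericalFun (p : ℂ × ℂ × (Fin n → ℂ) × (Fin n → ℂ) × ℂ) : ℂ :=
  Complex.exp (I * p.2.1 * p.2.2.2.2) *
    Complex.exp (-p.2.1 * (∑ j, (p.2.2.1 j ^ 2 + p.2.2.2.1 j ^ 2)) / 4) *
    ∑' k : ℕ, phiTerm n p k

set_option maxHeartbeats 1000000 in
/-- The series defining `Φ_{ξ,λ}(x+iy,t)` converges for every
`(ξ,λ,x,y,t) ∈ ℂ^{2n+3}`, the convergence of its partial sums is locally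
uniform, and the resulting function `Φ` is entire (holomorphic) on `ℂ^{2n+3}`. -/
theorem sphericalFun_entire (hn : 1 ≤ n) :
    (∀ p : ℂ × ℂ × (Fin n → ℂ) × (Fin n → ℂ) × ℂ, Summable (phiTerm n p)) ∧
    TendstoLocallyUniformly
      (fun (N : ℕ) (p : ℂ × ℂ × (Fin n → ℂ) × (Fin n → ℂ) × ℂ) =>
        ∑ k ∈ Finset.range N, phiTerm n p k)
      (fun p => ∑' k : ℕ, phiTerm n p k) atTop ∧
    Differentiable ℂ (sphericalFun n) := by
  have hsum : ∀ p : ℂ × ℂ × (Fin n → ℂ) × (Fin n → ℂ) × ℂ, Summable (phiTerm n p) := by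
    intro p
    refine Summable.of_norm (Summable.of_nonneg_of_le (fun k => norm_nonneg _)
      (fun k => phiTerm_norm_le n hn le_rfl k) (Real.summable_pow_div_factorial _))
  refine ⟨hsum, ?_, ?_⟩
  · rw [tendstoLocallyUniformly_iff_forall_isCompact]
    intro K hK
    obtain ⟨R, hR⟩ := hK.isBounded.subset_closedBall 0
    exact (tendstoUniformlyOn_tsum_nat (Real.summable_pow_div_factorial
        ((2 * n * (R + 1) ^ 2) * (((n : ℝ) + 3) * (R + 1))))
      (fun k p hp => phiTerm_norm_le n hn (mem_closedBall_zero_iff.mp hp) k)).mono hR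
  · have hS : Differentiable ℂ
        (fun p : ℂ × ℂ × (Fin n → ℂ) × (Fin n → ℂ) × ℂ => ∑' k, phiTerm n p k) := by
      intro p₀
      set R : ℝ := ‖p₀‖ + 2 with hRdef
      have hn1 : (1 : ℝ) ≤ n := by exact_mod_cast hn
      have hCpos : 0 < (2 * n * (R + 1) ^ 2) * (((n : ℝ) + 3) * (R + 1)) := by
        have hR1 : (0 : ℝ) < R + 1 := by positivity
        refine mul_pos (mul_pos (by linarith) (by positivity)) (mul_pos (by linarith) hR1)
      have hfac : ∀ k : ℕ, (0:ℝ) < k.factorial := fun k => by positivity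
      set u : ℕ → ℝ := fun k =>
        3 * (((2 * n * (R + 1) ^ 2) * (((n : ℝ) + 3) * (R + 1))) ^ k / k.factorial) with hudef
      have hu : Summable u := (Real.summable_pow_div_factorial _).mul_left 3
      set s : Set (ℂ × ℂ × (Fin n → ℂ) × (Fin n → ℂ) × ℂ) :=
        Metric.ball 0 (‖p₀‖ + 1) with hsdef
      have hopen : IsOpen s := Metric.isOpen_ball
      have hconn : IsPreconnected s := (convex_ball _ _).isPreconnected
      have hmem : p₀ ∈ s := by
        rw [hsdef, Metric.mem_ball, dist_zero_right]
        linarith [norm_nonneg p₀]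
      have hf : ∀ (k : ℕ) (p : ℂ × ℂ × (Fin n → ℂ) × (Fin n → ℂ) × ℂ), p ∈ s →
          HasFDerivAt (fun q => phiTerm n q k)
            (fderiv ℂ (fun q => phiTerm n q k) p) p :=
        fun k p _ => ((phiTerm_differentiable n k) p).hasFDerivAt
      have hf' : ∀ (k : ℕ) (p : ℂ × ℂ × (Fin n → ℂ) × (Fin n → ℂ) × ℂ), p ∈ s →
          ‖fderiv ℂ (fun q => phiTerm n q k) p‖ ≤ u k := by
        intro k p hp
        have hMpos : 0 < ((2 * n * (R + 1) ^ 2) * (((n : ℝ) + 3) * (R + 1))) ^ k /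
            (k.factorial : ℝ) := div_pos (pow_pos hCpos k) (hfac k)
        refine norm_fderiv_le_of_ball (phiTerm_differentiable n k) hMpos fun q hq => ?_
        refine phiTerm_norm_le n hn ?_ k
        rw [Metric.mem_ball] at hq
        rw [hsdef, Metric.mem_ball, dist_zero_right] at hp
        have h1 : ‖q‖ ≤ dist q p + ‖p‖ := by
          rw [← dist_zero_right]
          calc dist q 0 ≤ dist q p + dist p 0 := dist_triangle _ _ _
            _ = dist q p + ‖p‖ := by rw [dist_zero_right]
        rw [hRdef]
        linarith
      exact (hasFDerivAt_tsum_of_isPreconnected hu hopen hconn hf hf' hmem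
        (hsum p₀) hmem).differentiableAt
    unfold sphericalFun
    refine Differentiable.mul (Differentiable.mul ?_ ?_) hS
    · apply Differentiable.cexp
      fun_prop
    · apply Differentiable.cexp
      fun_prop


end
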